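/- arXiv:2009.01082 — 4 statements merged into one kernel-verified Lean document; each statement's English description precedes it below -/
import Mathlib

section
/- Let d ≥ 1 and M = 2^d, let N̂ = Σ_{n=0}^{M−1} n |n⟩⟨n| be the number operator and P̂ = Σ_{m=0}^{M−1} (2πm/M) |θ_m⟩⟨θ_m| the Pegg–Barnett phase operator. Then the commutator [N̂, P̂] = N̂P̂ − P̂N̂ has number-basis entries ⟨k|[N̂,P̂]|l⟩ = (2π/M²)(k−l) Σ_{r=0}^{M−1} r · exp(2πi r (k−l)/M); moreover [N̂, P̂] is a skew-Hermitian Toeplitz matrix, i.e., its (k,l) entry depends only on the integer difference k−l, and its conjugate transpose equals its negative. -/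
open Matrix

/-- The number operator `N̂ = ∑ n |n⟩⟨n|` on `ℂ^M`. -/
noncomputable def numOp (M : ℕ) : Matrix (Fin M) (Fin M) ℂ :=
  Matrix.diagonal fun n => ((n : ℕ) : ℂ)

/-- The phase state `|θ_m⟩ = M^{-1/2} ∑ exp(i θ_m n) |n⟩` with `θ_m = 2πm/M`. -/
noncomputable def phaseState (M : ℕ) (m : Fin M) : Fin M → ℂ :=
  fun n =>
    Complex.exp (Complex.I * ((2 * Real.pi * (m : ℕ) / M : ℝ) : ℂ) * ((n : ℕ) : ℂ)) /
      ((Real.sqrt M : ℝ) : ℂ)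

/-- The Pegg–Barnett phase operator `P̂ = ∑ θ_m |θ_m⟩⟨θ_m|`. -/
noncomputable def phaseOp (M : ℕ) : Matrix (Fin M) (Fin M) ℂ :=
  ∑ m : Fin M,
    ((2 * Real.pi * (m : ℕ) / M : ℝ) : ℂ) •
      Matrix.vecMulVec (phaseState M m) (star (phaseState M m))

lemma comm_entry (M : ℕ) (hM : 0 < M) (k l : Fin M) :
    (numOp M * phaseOp M - phaseOp M * numOp M) k l
      = (2 * (Real.pi : ℂ) / ((M : ℕ) : ℂ) ^ 2) *
          (((k : ℕ) : ℂ) - ((l : ℕ) : ℂ)) *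
          ∑ r : Fin M,
            ((r : ℕ) : ℂ) *
              Complex.exp (2 * (Real.pi : ℂ) * Complex.I * ((r : ℕ) : ℂ) *
                (((k : ℕ) : ℂ) - ((l : ℕ) : ℂ)) / ((M : ℕ) : ℂ)) := by
  have hM0 : ((M : ℕ) : ℂ) ≠ 0 := by exact_mod_cast Nat.cast_ne_zero.mpr hM.ne'
  have hsq : ((Real.sqrt M : ℝ) : ℂ) * ((Real.sqrt M : ℝ) : ℂ) = (M : ℂ) := by
    rw [← Complex.ofReal_mul, Real.mul_self_sqrt (Nat.cast_nonneg M)]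
    simp
  have hP : phaseOp M k l = ∑ m : Fin M,
      (2 * (Real.pi : ℂ) * ((m : ℕ) : ℂ) / ((M : ℕ) : ℂ) ^ 2) *
        Complex.exp (2 * (Real.pi : ℂ) * Complex.I * ((m : ℕ) : ℂ) *
          (((k : ℕ) : ℂ) - ((l : ℕ) : ℂ)) / ((M : ℕ) : ℂ)) := by
    simp only [phaseOp, Matrix.sum_apply, Matrix.smul_apply, Matrix.vecMulVec_apply,
      Pi.star_apply, phaseState, Complex.star_def, smul_eq_mul]
    refine Finset.sum_congr rfl fun m _ => ?_
    rw [map_div₀, ← Complex.exp_conj]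
    simp only [_root_.map_mul, Complex.conj_I, Complex.conj_ofReal, Complex.conj_natCast]
    rw [div_mul_div_comm, ← Complex.exp_add, hsq]
    rw [show Complex.I * ((2 * Real.pi * (m : ℕ) / M : ℝ) : ℂ) * ((k : ℕ) : ℂ) +
        -Complex.I * ((2 * Real.pi * (m : ℕ) / M : ℝ) : ℂ) * ((l : ℕ) : ℂ)
        = 2 * (Real.pi : ℂ) * Complex.I * ((m : ℕ) : ℂ) *
          (((k : ℕ) : ℂ) - ((l : ℕ) : ℂ)) / ((M : ℕ) : ℂ) from by push_cast; ring]
    push_cast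
    ring
  rw [Matrix.sub_apply, numOp, Matrix.diagonal_mul, Matrix.mul_diagonal, hP,
    Finset.mul_sum, Finset.sum_mul, Finset.mul_sum, ← Finset.sum_sub_distrib]
  refine Finset.sum_congr rfl fun m _ => ?_
  ring


/-- the number–phase commutator `[N̂, P̂]` has entries
`(2π/M²)(k−l) ∑_r r exp(2πi r (k−l)/M)`, is Toeplitz, and is skew-Hermitian. -/
theorem number_phase_commutator (d : ℕ) (hd : 1 ≤ d) :
    (∀ k l : Fin (2 ^ d),
        (numOp (2 ^ d) * phaseOp (2 ^ d) - phaseOp (2 ^ d) * numOp (2 ^ d)) k l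
          = (2 * (Real.pi : ℂ) / ((2 ^ d : ℕ) : ℂ) ^ 2) *
              (((k : ℕ) : ℂ) - ((l : ℕ) : ℂ)) *
              ∑ r : Fin (2 ^ d),
                ((r : ℕ) : ℂ) *
                  Complex.exp (2 * (Real.pi : ℂ) * Complex.I * ((r : ℕ) : ℂ) *
                    (((k : ℕ) : ℂ) - ((l : ℕ) : ℂ)) / ((2 ^ d : ℕ) : ℂ)))
      ∧ (∀ k l k' l' : Fin (2 ^ d),
          ((k : ℕ) : ℤ) - ((l : ℕ) : ℤ) = ((k' : ℕ) : ℤ) - ((l' : ℕ) : ℤ) →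
            (numOp (2 ^ d) * phaseOp (2 ^ d) - phaseOp (2 ^ d) * numOp (2 ^ d)) k l
              = (numOp (2 ^ d) * phaseOp (2 ^ d) - phaseOp (2 ^ d) * numOp (2 ^ d)) k' l')
      ∧ (numOp (2 ^ d) * phaseOp (2 ^ d) - phaseOp (2 ^ d) * numOp (2 ^ d))ᴴ
          = -(numOp (2 ^ d) * phaseOp (2 ^ d) - phaseOp (2 ^ d) * numOp (2 ^ d)) := by
  have hM : 0 < 2 ^ d := Nat.pow_pos (by norm_num)
  refine ⟨fun k l => comm_entry _ hM k l, fun k l k' l' h => ?_, ?_⟩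
  · have hc : ((k : ℕ) : ℂ) - ((l : ℕ) : ℂ) = ((k' : ℕ) : ℂ) - ((l' : ℕ) : ℂ) := by
      have := congrArg (fun z : ℤ => (z : ℂ)) h
      push_cast at this
      exact this
    rw [comm_entry _ hM, comm_entry _ hM, hc]
  · ext k l
    rw [Matrix.conjTranspose_apply, Matrix.neg_apply, comm_entry _ hM, comm_entry _ hM]
    simp only [Complex.star_def, _root_.map_mul, map_sum, map_div₀, map_pow, map_ofNat, Complex.conj_ofReal,
      Complex.conj_natCast, ← Complex.exp_conj, Complex.conj_I, map_sub]
    rw [Finset.sum_congr rfl (fun r _ => by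
      rw [show 2 * (Real.pi : ℂ) * -Complex.I * ((r : ℕ) : ℂ) *
          (((l : ℕ) : ℂ) - ((k : ℕ) : ℂ)) / ((2 ^ d : ℕ) : ℂ)
          = 2 * (Real.pi : ℂ) * Complex.I * ((r : ℕ) : ℂ) *
          (((k : ℕ) : ℂ) - ((l : ℕ) : ℂ)) / ((2 ^ d : ℕ) : ℂ) from by ring])]
    ring
end

section
/- Let d ≥ 1, M = 2^d, and let f : {0, …, M−1} → {0,1} be any Boolean function with associated hypergraph state |G⟩ = M^{−1/2} Σ_{n=0}^{M−1} (−1)^{f(n)} |n⟩. Then for every integer k with 1 ≤ k ≤ M−1, the k-th normally ordered moment is m_k = ⟨G| (a†)^k a^k |G⟩ = Π_{j=1}^{k} j(2^d − j)/(j+1) = (1/(k+1)) · Π_{j=1}^{k} (2^d − j). In particular m_k depends only on d and k, not on f. -/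
open Matrix Finset

/-- The truncated annihilation operator on `ℂ^M`: `a |n⟩ = √n |n-1⟩`. -/
noncomputable def ann (M : ℕ) : Matrix (Fin M) (Fin M) ℂ :=
  Matrix.of fun k l => if (k : ℕ) + 1 = (l : ℕ) then ((Real.sqrt (l : ℕ) : ℝ) : ℂ) else 0

/-- The hypergraph state `|G⟩ = M^{-1/2} ∑ (-1)^(f n) |n⟩` for a Boolean function `f`. -/
noncomputable def hgState (M : ℕ) (f : Fin M → Fin 2) : Fin M → ℂ :=
  fun n => (-1 : ℂ) ^ (f n : ℕ) / ((Real.sqrt M : ℝ) : ℂ)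

lemma ann_pow_apply (M k : ℕ) (m n : Fin M) :
    (ann M ^ k) m n =
      if (m : ℕ) + k = (n : ℕ) then
        ((Real.sqrt ((n : ℕ).descFactorial k) : ℝ) : ℂ) else 0 := by
  induction k generalizing m n with
  | zero =>
    simp [Matrix.one_apply, Fin.ext_iff, eq_comm]
  | succ k ih =>
    rw [pow_succ, Matrix.mul_apply]
    by_cases hn : (m : ℕ) + (k + 1) = (n : ℕ)
    · have hlt : (m : ℕ) + k < M := by omega
      set p0 : Fin M := ⟨(m : ℕ) + k, hlt⟩ with hp0
      rw [Finset.sum_eq_single p0]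
      · have h1 : (m : ℕ) + k = (p0 : ℕ) := rfl
        have h2 : (p0 : ℕ) + 1 = (n : ℕ) := by simp [hp0]; omega
        rw [ih, if_pos h1, ann, Matrix.of_apply, if_pos h2, if_pos hn,
          ← Complex.ofReal_mul]
        have hn1 : (n : ℕ) = (p0 : ℕ) + 1 := h2.symm
        congr 1
        have hd' : (((n : ℕ).descFactorial (k + 1) : ℕ) : ℝ)
            = (((n : ℕ) : ℝ)) * (((p0 : ℕ).descFactorial k : ℕ) : ℝ) := by
          rw [hn1, Nat.succ_descFactorial_succ]; push_cast; ring
        rw [hd', Real.sqrt_mul (by positivity), mul_comm]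
      · intro p _ hp
        rw [ih]
        rcases eq_or_ne ((m : ℕ) + k) (p : ℕ) with h | h
        · exact absurd (Fin.ext h.symm) hp
        · rw [if_neg h, zero_mul]
      · intro h; exact absurd (Finset.mem_univ p0) h
    · rw [if_neg hn]
      apply Finset.sum_eq_zero
      intro p _
      rw [ih, ann, Matrix.of_apply]
      rcases eq_or_ne ((m : ℕ) + k) (p : ℕ) with h | h
      · rw [if_pos h, if_neg (show ¬((p : ℕ) + 1 = (n : ℕ)) by omega), mul_zero]
      · rw [if_neg h, zero_mul]

lemma sum_range_choose' (M k : ℕ) :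
    ∑ n ∈ range M, n.choose k = M.choose (k + 1) := by
  induction M with
  | zero => simp
  | succ M ih => rw [Finset.sum_range_succ, ih, Nat.choose_succ_succ' M k]; omega

lemma prod_frac (K : ℕ) :
    ∏ j ∈ Finset.Icc 1 K, ((j : ℂ) / ((j : ℂ) + 1)) = 1 / ((K : ℂ) + 1) := by
  induction K with
  | zero => simp
  | succ K ih =>
    rw [Finset.prod_Icc_succ_top (by omega), ih]
    have h1 : ((K : ℂ) + 1) ≠ 0 := Nat.cast_add_one_ne_zero K
    have h2 : ((K : ℂ) + 1) + 1 ≠ 0 := by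
      intro hc
      exact Nat.cast_add_one_ne_zero (R := ℂ) (K + 1) (by push_cast; linear_combination hc)
    push_cast at h2 ⊢
    field_simp

lemma main_calc (M : ℕ) (f : Fin M → Fin 2) (k : ℕ) (hM1 : 1 ≤ M) (hkM : k + 1 ≤ M) :
    star (hgState M f) ⬝ᵥ (((ann M)ᴴ ^ k * ann M ^ k).mulVec (hgState M f))
      = (1 / ((k : ℂ) + 1)) * ∏ j ∈ Finset.Icc 1 k, ((M : ℂ) - (j : ℂ)) := by
  set v := hgState M f with hv
  set w := (ann M ^ k).mulVec v with hw
  have key : star v ⬝ᵥ (((ann M)ᴴ ^ k * ann M ^ k).mulVec v) = star w ⬝ᵥ w := by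
    rw [← Matrix.conjTranspose_pow, ← Matrix.mulVec_mulVec,
      Matrix.dotProduct_mulVec, ← Matrix.star_mulVec, hw]
  have hwm : ∀ m : Fin M, w m =
      if h : (m : ℕ) + k < M then
        ((Real.sqrt (((m : ℕ) + k).descFactorial k) : ℝ) : ℂ) * v ⟨(m : ℕ) + k, h⟩
      else 0 := by
    intro m
    rw [hw, Matrix.mulVec, dotProduct]
    by_cases h : (m : ℕ) + k < M
    · rw [dif_pos h]
      rw [Finset.sum_eq_single (⟨(m : ℕ) + k, h⟩ : Fin M)]
      · rw [ann_pow_apply, if_pos rfl]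
      · intro p _ hp
        rw [ann_pow_apply, if_neg (fun hc => hp (Fin.ext hc.symm)), zero_mul]
      · intro h'; exact absurd (Finset.mem_univ _) h'
    · rw [dif_neg h]
      apply Finset.sum_eq_zero
      intro p _
      rw [ann_pow_apply, if_neg (by omega), zero_mul]
  have hMc : (M : ℂ) ≠ 0 := Nat.cast_ne_zero.mpr (by omega)
  have hvv : ∀ n : Fin M, star (v n) * v n = 1 / (M : ℂ) := by
    intro n
    have hs : ((Real.sqrt M : ℝ) : ℂ) * ((Real.sqrt M : ℝ) : ℂ) = (M : ℂ) := by
      rw [← Complex.ofReal_mul, Real.mul_self_sqrt (by positivity),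
        Complex.ofReal_natCast]
    have h2 : ((f n : ℕ)) = 0 ∨ ((f n : ℕ)) = 1 := by omega
    simp only [hv, hgState, star_div₀, star_pow, star_neg, star_one]
    have hsr : star (((Real.sqrt M : ℝ) : ℂ)) = ((Real.sqrt M : ℝ) : ℂ) := by
      rw [Complex.star_def, Complex.conj_ofReal]
    rw [hsr, div_mul_div_comm, hs]
    rcases h2 with h | h <;> rw [h] <;> norm_num
  have hsum : star w ⬝ᵥ w
      = (((∑ i ∈ range (M - k), ((i + k).descFactorial k)) : ℕ) : ℂ) / (M : ℂ) := by
    have step1 : star w ⬝ᵥ w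
        = ∑ m : Fin M, (if (m : ℕ) + k < M then
            ((((m : ℕ) + k).descFactorial k : ℕ) : ℂ) / (M : ℂ) else 0) := by
      rw [dotProduct]
      refine Finset.sum_congr rfl fun m _ => ?_
      rw [Pi.star_apply, hwm m]
      split_ifs with h
      · have hcc : star ((Real.sqrt (((m : ℕ) + k).descFactorial k) : ℝ) : ℂ)
            = ((Real.sqrt (((m : ℕ) + k).descFactorial k) : ℝ) : ℂ) := by
          rw [Complex.star_def, Complex.conj_ofReal]
        rw [star_mul', hcc, mul_mul_mul_comm, hvv, ← Complex.ofReal_mul,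
          Real.mul_self_sqrt (by positivity)]
        push_cast
        ring
      · simp
    have step2 : (∑ m : Fin M, (if (m : ℕ) + k < M then
            ((((m : ℕ) + k).descFactorial k : ℕ) : ℂ) / (M : ℂ) else 0))
        = ∑ i ∈ range M, (if i + k < M then
            (((i + k).descFactorial k : ℕ) : ℂ) / (M : ℂ) else 0) :=
      Fin.sum_univ_eq_sum_range
        (fun i => if i + k < M then (((i + k).descFactorial k : ℕ) : ℂ) / (M : ℂ) else 0) M
    have hss : range (M - k) ⊆ range M := Finset.range_subset_range.2 (Nat.sub_le M k)
    rw [step1, step2, ← Finset.sum_subset hss (fun i hi hni => by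
      rw [Finset.mem_range] at hi; rw [Finset.mem_range] at hni
      exact if_neg (by omega))]
    rw [Nat.cast_sum, Finset.sum_div]
    refine Finset.sum_congr rfl fun i hi => ?_
    rw [Finset.mem_range] at hi
    rw [if_pos (by omega)]
  have hN : ∑ i ∈ range (M - k), (i + k).descFactorial k
      = Nat.factorial k * M.choose (k + 1) := by
    have h1 : ∑ i ∈ range (M - k), (i + k).descFactorial k
        = Nat.factorial k * ∑ i ∈ range (M - k), (i + k).choose k := by
      rw [Finset.mul_sum]
      exact Finset.sum_congr rfl fun i _ =>
        Nat.descFactorial_eq_factorial_mul_choose _ _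
    have h2 : M - k = (M - k - 1) + 1 := by omega
    rw [h1, h2, Nat.sum_range_add_choose, show M - k - 1 + k + 1 = M by omega]
  have hNd : (k + 1) * (Nat.factorial k * M.choose (k + 1)) = M.descFactorial (k + 1) := by
    rw [Nat.descFactorial_eq_factorial_mul_choose, Nat.factorial_succ, mul_assoc]
  have hP : ((M.descFactorial (k + 1) : ℕ) : ℂ)
      = (M : ℂ) * ∏ j ∈ Finset.Icc 1 k, ((M : ℂ) - (j : ℂ)) := by
    rw [Nat.descFactorial_eq_prod_range, Nat.cast_prod]
    have hc : ∀ i ∈ range (k + 1), ((M - i : ℕ) : ℂ) = (M : ℂ) - (i : ℂ) := by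
      intro i hi
      rw [Finset.mem_range] at hi
      rw [Nat.cast_sub (by omega)]
    rw [Finset.prod_congr rfl hc, Finset.prod_range_succ', Nat.cast_zero, sub_zero,
      mul_comm]
    congr 1
    rw [← Finset.Ico_add_one_right_eq_Icc, Finset.prod_Ico_eq_prod_range]
    refine Finset.prod_congr (by norm_num) fun i _ => by push_cast; ring
  have hk1c : ((k : ℂ) + 1) ≠ 0 := Nat.cast_add_one_ne_zero k
  have hNC : ((k : ℂ) + 1) * ((Nat.factorial k * M.choose (k + 1) : ℕ) : ℂ)
      = (M : ℂ) * ∏ j ∈ Finset.Icc 1 k, ((M : ℂ) - (j : ℂ)) := by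
    rw [← hP, ← hNd]
    push_cast
    ring
  rw [key, hsum, hN]
  push_cast at hNC ⊢
  field_simp
  linear_combination hNC

/-- for every `1 ≤ k ≤ 2^d − 1` the normally ordered moment
`m_k = ⟨G| (a†)^k a^k |G⟩` equals `∏_{j=1}^k j(2^d − j)/(j+1) = (1/(k+1)) ∏_{j=1}^k (2^d − j)`,
independently of the Boolean function `f`. -/
theorem hypergraph_normally_ordered_moments (d : ℕ) (hd : 1 ≤ d)
    (f : Fin (2 ^ d) → Fin 2) (k : ℕ) (hk1 : 1 ≤ k) (hk2 : k ≤ 2 ^ d - 1) :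
    star (hgState (2 ^ d) f) ⬝ᵥ
        (((ann (2 ^ d))ᴴ ^ k * ann (2 ^ d) ^ k).mulVec (hgState (2 ^ d) f))
      = ∏ j ∈ Finset.Icc 1 k, ((j : ℂ) * ((2 ^ d : ℂ) - (j : ℂ)) / ((j : ℂ) + 1))
    ∧ star (hgState (2 ^ d) f) ⬝ᵥ
        (((ann (2 ^ d))ᴴ ^ k * ann (2 ^ d) ^ k).mulVec (hgState (2 ^ d) f))
      = (1 / ((k : ℂ) + 1)) * ∏ j ∈ Finset.Icc 1 k, ((2 ^ d : ℂ) - (j : ℂ)) := by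
  have hM1 : 1 ≤ 2 ^ d := Nat.one_le_two_pow
  have hkM : k + 1 ≤ 2 ^ d := by omega
  have hMC : (2 : ℂ) ^ d = ((2 ^ d : ℕ) : ℂ) := by push_cast; ring
  have hmain := main_calc (2 ^ d) f k hM1 hkM
  have hsame : ∏ j ∈ Finset.Icc 1 k, ((j : ℂ) * (((2 ^ d : ℕ) : ℂ) - (j : ℂ)) / ((j : ℂ) + 1))
      = (1 / ((k : ℂ) + 1)) * ∏ j ∈ Finset.Icc 1 k, (((2 ^ d : ℕ) : ℂ) - (j : ℂ)) := by
    have hstep : ∀ j ∈ Finset.Icc 1 k,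
        (j : ℂ) * (((2 ^ d : ℕ) : ℂ) - (j : ℂ)) / ((j : ℂ) + 1)
          = ((j : ℂ) / ((j : ℂ) + 1)) * (((2 ^ d : ℕ) : ℂ) - (j : ℂ)) :=
      fun j _ => by ring
    rw [Finset.prod_congr rfl hstep, Finset.prod_mul_distrib, prod_frac k]
  rw [hMC]
  exact ⟨by rw [hsame]; exact hmain, hmain⟩
end

section
/- Let d ≥ 2, M = 2^d, and let f : {0, …, M−1} → {0,1} be any Boolean function with associated hypergraph state |G⟩. Define m₁ = ⟨G| a†a |G⟩, m₂ = ⟨G| (a†)²a² |G⟩, μ₁ = ⟨G| N̂ |G⟩, μ₂ = ⟨G| N̂² |G⟩, and the Agarwal–Tara parameter A₂ = (m₂ − m₁²) / ((μ₂ − μ₁²) − (m₂ − m₁²)). Then A₂ = (2^d − 5)/6 for every hypergraph state on d vertices; in particular A₂ < 0 if and only if d = 2. -/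
open Matrix

lemma sum_filter_shift (M s : ℕ) (k : Fin M) (F : Fin M → ℂ) :
    ∑ j : Fin M, (if (j : ℕ) + s = (k : ℕ) then F j else 0)
      = if h : s ≤ (k : ℕ) then F ⟨(k : ℕ) - s, lt_of_le_of_lt (Nat.sub_le _ _) k.2⟩ else 0 := by
  rcases le_or_gt s (k : ℕ) with h | h
  · rw [dif_pos h]
    rw [Finset.sum_eq_single (⟨(k : ℕ) - s, lt_of_le_of_lt (Nat.sub_le _ _) k.2⟩ : Fin M)]
    · rw [if_pos]; simp [Nat.sub_add_cancel h]
    · intro j _ hj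
      rw [if_neg]
      intro hc
      exact hj (Fin.ext (by simp; omega))
    · simp
  · rw [dif_neg (by omega)]
    apply Finset.sum_eq_zero
    intro j _
    rw [if_neg (by omega)]

lemma sum_pick (M s : ℕ) (k : Fin M) (F : Fin M → ℂ) :
    ∑ j : Fin M, (if (k : ℕ) + s = (j : ℕ) then F j else 0)
      = if h : (k : ℕ) + s < M then F ⟨(k : ℕ) + s, h⟩ else 0 := by
  rcases lt_or_ge ((k : ℕ) + s) M with h | h
  · rw [dif_pos h]
    rw [Finset.sum_eq_single (⟨(k : ℕ) + s, h⟩ : Fin M)]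
    · rw [if_pos]; simp
    · intro j _ hj
      rw [if_neg]
      intro hc
      exact hj (Fin.ext (by simp; omega))
    · simp
  · rw [dif_neg (by omega)]
    apply Finset.sum_eq_zero
    intro j _
    have := j.2
    rw [if_neg (by omega)]

lemma diag1 (M : ℕ) :
    (ann M)ᴴ * ann M = Matrix.diagonal (fun k : Fin M => ((k : ℕ) : ℂ)) := by
  ext k l
  simp only [Matrix.mul_apply, Matrix.conjTranspose_apply, ann, Matrix.of_apply,
    RCLike.star_def, Matrix.diagonal_apply]
  have key : ∀ j : Fin M,
      (starRingEnd ℂ) (if (j : ℕ) + 1 = (k : ℕ) then ((Real.sqrt (k : ℕ) : ℝ) : ℂ) else 0) *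
        (if (j : ℕ) + 1 = (l : ℕ) then ((Real.sqrt (l : ℕ) : ℝ) : ℂ) else 0)
      = if (j : ℕ) + 1 = (k : ℕ) then
          (if (j : ℕ) + 1 = (l : ℕ) then ((Real.sqrt (k : ℕ) : ℝ) : ℂ) * ((Real.sqrt (l : ℕ) : ℝ) : ℂ) else 0)
        else 0 := by
    intro j; split_ifs <;> simp [Complex.conj_ofReal]
  rw [Finset.sum_congr rfl (fun j _ => key j), sum_filter_shift]
  simp only [Fin.val_mk]
  split_ifs with h1 h2 h3 h3 h2
  · rw [← Complex.ofReal_mul]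
    have hkl : (k : ℕ) = (l : ℕ) := Fin.val_eq_val k l |>.mpr h3
    rw [← hkl, Real.mul_self_sqrt (Nat.cast_nonneg _)]
    norm_num
  · exfalso; apply h3; apply Fin.ext; omega
  · exfalso; apply h2; omega
  · rfl
  · have : (k : ℕ) = 0 := by omega
    simp [this]
  · rfl

lemma sq_apply (M : ℕ) (k l : Fin M) :
    (ann M ^ 2) k l = if (k : ℕ) + 2 = (l : ℕ) then
      ((Real.sqrt ((k : ℕ) + 1) * Real.sqrt ((k : ℕ) + 2) : ℝ) : ℂ) else 0 := by
  rw [pow_two]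
  simp only [Matrix.mul_apply, ann, Matrix.of_apply, ite_mul, zero_mul]
  have key : ∀ j : Fin M,
      (if (k : ℕ) + 1 = (j : ℕ) then ((Real.sqrt (j : ℕ) : ℝ) : ℂ) *
          (if (j : ℕ) + 1 = (l : ℕ) then ((Real.sqrt (l : ℕ) : ℝ) : ℂ) else 0) else 0)
      = if (k : ℕ) + 1 = (j : ℕ) then
          (if (j : ℕ) + 1 = (l : ℕ) then ((Real.sqrt (j : ℕ) : ℝ) : ℂ) * ((Real.sqrt (l : ℕ) : ℝ) : ℂ) else 0)
        else 0 := by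
    intro j; split_ifs <;> simp
  rw [Finset.sum_congr rfl (fun j _ => key j), sum_pick]
  simp only [Fin.val_mk]
  by_cases hc : (k : ℕ) + 2 = (l : ℕ)
  · have hlt : (k : ℕ) + 1 < M := by have := l.2; omega
    rw [dif_pos hlt, if_pos (by omega : (k : ℕ) + 1 + 1 = (l : ℕ)), if_pos hc]
    have hl : ((l : ℕ) : ℝ) = ((k : ℕ) : ℝ) + 2 := by exact_mod_cast hc.symm
    rw [Complex.ofReal_mul, hl]
    norm_num
  · rcases lt_or_ge ((k : ℕ) + 1) M with h | h
    · rw [dif_pos h, if_neg (show ¬((k : ℕ) + 1 + 1 = (l : ℕ)) by omega), if_neg hc]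
    · rw [dif_neg (by omega), if_neg hc]

lemma diag2 (M : ℕ) :
    (ann M)ᴴ ^ 2 * ann M ^ 2
      = Matrix.diagonal (fun k : Fin M => ((k : ℕ) : ℂ) * (((k : ℕ) : ℂ) - 1)) := by
  ext k l
  rw [← Matrix.conjTranspose_pow]
  simp only [Matrix.mul_apply, Matrix.conjTranspose_apply, RCLike.star_def,
    Matrix.diagonal_apply]
  have key : ∀ j : Fin M,
      (starRingEnd ℂ) ((ann M ^ 2) j k) * (ann M ^ 2) j l
      = if (j : ℕ) + 2 = (k : ℕ) then
          (if (j : ℕ) + 2 = (l : ℕ) then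
            ((Real.sqrt ((j : ℕ) + 1) : ℝ) : ℂ) * ((Real.sqrt ((j : ℕ) + 1) : ℝ) : ℂ) *
            (((Real.sqrt ((j : ℕ) + 2) : ℝ) : ℂ) * ((Real.sqrt ((j : ℕ) + 2) : ℝ) : ℂ)) else 0)
        else 0 := by
    intro j
    rw [sq_apply, sq_apply]
    split_ifs <;> simp [Complex.conj_ofReal] <;> ring
  rw [Finset.sum_congr rfl (fun j _ => key j), sum_filter_shift]
  simp only [Fin.val_mk]
  split_ifs with h1 h2 h3 h3 h2
  · obtain ⟨m, hm⟩ : ∃ m, (k : ℕ) = m + 2 := ⟨(k : ℕ) - 2, by omega⟩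
    simp only [hm, Nat.add_sub_cancel]
    have e1 : ((Real.sqrt ((m : ℕ) + 1) : ℝ) : ℂ) * ((Real.sqrt ((m : ℕ) + 1) : ℝ) : ℂ)
        = (((m : ℝ) + 1 : ℝ) : ℂ) := by
      rw [← Complex.ofReal_mul, Real.mul_self_sqrt (by positivity)]
    have e2 : ((Real.sqrt ((m : ℕ) + 2) : ℝ) : ℂ) * ((Real.sqrt ((m : ℕ) + 2) : ℝ) : ℂ)
        = (((m : ℝ) + 2 : ℝ) : ℂ) := by
      rw [← Complex.ofReal_mul, Real.mul_self_sqrt (by positivity)]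
    push_cast at e1 e2 ⊢
    rw [e1, e2]
    ring
  · exfalso; apply h3; apply Fin.ext; omega
  · exfalso; apply h2; omega
  · rfl
  · have : (k : ℕ) = 0 ∨ (k : ℕ) = 1 := by omega
    rcases this with h | h <;> simp [h]
  · rfl

lemma diag3 (M : ℕ) :
    ((ann M)ᴴ * ann M) ^ 2 = Matrix.diagonal (fun k : Fin M => ((k : ℕ) : ℂ) ^ 2) := by
  rw [pow_two, diag1, Matrix.diagonal_mul_diagonal]
  congr 1
  funext k
  ring

lemma hg_star_mul (M : ℕ) (f : Fin M → Fin 2) (k : Fin M) :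
    star (hgState M f k) * hgState M f k = 1 / M := by
  unfold hgState
  rw [RCLike.star_def, map_div₀, Complex.conj_ofReal]
  have h1 : (starRingEnd ℂ) ((-1 : ℂ) ^ (f k : ℕ)) = (-1 : ℂ) ^ (f k : ℕ) := by
    rw [map_pow]; norm_num
  rw [h1, div_mul_div_comm, ← mul_pow, neg_mul_neg, one_mul, one_pow,
    ← Complex.ofReal_mul, Real.mul_self_sqrt (Nat.cast_nonneg _)]
  norm_num

lemma moment_eq (M : ℕ) (f : Fin M → Fin 2) (c : Fin M → ℂ) :
    star (hgState M f) ⬝ᵥ (Matrix.diagonal c).mulVec (hgState M f) = (∑ k, c k) / M := by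
  simp only [dotProduct, Pi.star_apply, Matrix.mulVec_diagonal]
  have h2 : ∀ k : Fin M, star (hgState M f k) * (c k * hgState M f k) = c k * (1 / M) := by
    intro k
    rw [← hg_star_mul M f k]; ring
  rw [Finset.sum_congr rfl (fun k _ => h2 k), ← Finset.sum_mul]
  ring

lemma sum_cast (M : ℕ) : ∑ k : Fin M, ((k : ℕ) : ℂ) = ((M : ℂ) ^ 2 - M) / 2 := by
  rw [Fin.sum_univ_eq_sum_range (fun n => ((n : ℕ) : ℂ))]
  induction M with
  | zero => simp
  | succ n ih => rw [Finset.sum_range_succ, ih]; push_cast; ring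

lemma sum_sq (M : ℕ) :
    ∑ k : Fin M, ((k : ℕ) : ℂ) ^ 2 = (2 * (M : ℂ) ^ 3 - 3 * M ^ 2 + M) / 6 := by
  rw [Fin.sum_univ_eq_sum_range (fun n => ((n : ℕ) : ℂ) ^ 2)]
  induction M with
  | zero => simp
  | succ n ih => rw [Finset.sum_range_succ, ih]; push_cast; ring

lemma sum_prod (M : ℕ) :
    ∑ k : Fin M, (((k : ℕ) : ℂ) * (((k : ℕ) : ℂ) - 1))
      = (2 * (M : ℂ) ^ 3 - 3 * M ^ 2 + M) / 6 - ((M : ℂ) ^ 2 - M) / 2 := by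
  have h : ∀ k : Fin M, ((k : ℕ) : ℂ) * (((k : ℕ) : ℂ) - 1) = ((k : ℕ) : ℂ) ^ 2 - ((k : ℕ) : ℂ) :=
    fun k => by ring
  rw [Finset.sum_congr rfl (fun k _ => h k), Finset.sum_sub_distrib, sum_sq, sum_cast]

/-- the Agarwal–Tara parameter
`A₂ = (m₂ − m₁²)/((μ₂ − μ₁²) − (m₂ − m₁²))` of any hypergraph state on `d ≥ 2`
vertices equals `(2^d − 5)/6`; in particular it is negative iff `d = 2`. -/
theorem agarwal_tara_A2 (d : ℕ) (hd : 2 ≤ d) (f : Fin (2 ^ d) → Fin 2) :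
    let a := ann (2 ^ d)
    let G := hgState (2 ^ d) f
    let m1 := star G ⬝ᵥ ((aᴴ * a).mulVec G)
    let m2 := star G ⬝ᵥ ((aᴴ ^ 2 * a ^ 2).mulVec G)
    let μ1 := star G ⬝ᵥ ((aᴴ * a).mulVec G)
    let μ2 := star G ⬝ᵥ (((aᴴ * a) ^ 2).mulVec G)
    (m2 - m1 ^ 2) / ((μ2 - μ1 ^ 2) - (m2 - m1 ^ 2)) = ((2 ^ d : ℂ) - 5) / 6
      ∧ ((((2 : ℝ) ^ d - 5) / 6 < 0) ↔ d = 2) := by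
  intro a G m1 m2 μ1 μ2
  set x : ℂ := (2 : ℂ) ^ d with hx
  have hM : ((2 ^ d : ℕ) : ℂ) = x := by push_cast; rfl
  have h1 : m1 = ((x ^ 2 - x) / 2) / x := by
    show star G ⬝ᵥ ((aᴴ * a).mulVec G) = _
    rw [show aᴴ * a = Matrix.diagonal (fun k : Fin (2 ^ d) => ((k : ℕ) : ℂ)) from diag1 _,
      moment_eq, sum_cast, hM]
  have h2 : m2 = ((2 * x ^ 3 - 3 * x ^ 2 + x) / 6 - (x ^ 2 - x) / 2) / x := by
    show star G ⬝ᵥ ((aᴴ ^ 2 * a ^ 2).mulVec G) = _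
    rw [show aᴴ ^ 2 * a ^ 2
        = Matrix.diagonal (fun k : Fin (2 ^ d) => ((k : ℕ) : ℂ) * (((k : ℕ) : ℂ) - 1)) from diag2 _,
      moment_eq, sum_prod, hM]
  have h3 : μ2 = ((2 * x ^ 3 - 3 * x ^ 2 + x) / 6) / x := by
    show star G ⬝ᵥ (((aᴴ * a) ^ 2).mulVec G) = _
    rw [show (aᴴ * a) ^ 2 = Matrix.diagonal (fun k : Fin (2 ^ d) => ((k : ℕ) : ℂ) ^ 2) from diag3 _,
      moment_eq, sum_sq, hM]
  have hμ1 : μ1 = m1 := rfl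
  have hx0 : x ≠ 0 := pow_ne_zero _ two_ne_zero
  have hx1 : x - 1 ≠ 0 := by
    rw [sub_ne_zero]
    rw [← hM]
    intro hc
    have : (2 : ℕ) ^ d = 1 := by exact_mod_cast hc
    have : 4 ≤ (2 : ℕ) ^ d := by
      calc (4 : ℕ) = 2 ^ 2 := rfl
      _ ≤ 2 ^ d := Nat.pow_le_pow_right (by norm_num) hd
    omega
  constructor
  · have hnum : m2 - m1 ^ 2 = (x - 1) * (x - 5) / 12 := by
      rw [h2, h1]; field_simp; ring
    have hden : (μ2 - μ1 ^ 2) - (m2 - m1 ^ 2) = (x - 1) / 2 := by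
      rw [hμ1, h3, h1, h2]; field_simp; ring
    rw [hden, hnum]
    field_simp [hx1]
    ring
  · constructor
    · intro h
      by_contra hne
      have hd3 : 3 ≤ d := by omega
      have h8 : (8 : ℝ) ≤ 2 ^ d := by
        calc (8 : ℝ) = 2 ^ 3 := by norm_num
        _ ≤ 2 ^ d := by
          apply pow_le_pow_right₀ (by norm_num) hd3
      linarith
    · rintro rfl
      norm_num
end

section
/- Let d = 3, M = 8, and let f : {0, …, 7} → {0,1} be any Boolean function with associated hypergraph state |G⟩. Set m_k = ⟨G| (a†)^k a^k |G⟩ and μ_k = ⟨G| N̂^k |G⟩ for k = 1, 2, 3, 4, and form the 3×3 moment matrices m^{(3)} = [[1, m₁, m₂],[m₁, m₂, m₃],[m₂, m₃, m₄]] and μ^{(3)} = [[1, μ₁, μ₂],[μ₁, μ₂, μ₃],[μ₂, μ₃, μ₄]]. Then det m^{(3)} = −245/4, det μ^{(3)} = 441/4, and the Agarwal–Tara parameter A₃ = det m^{(3)} / (det μ^{(3)} − det m^{(3)}) = −5/14 < 0, so every hypergraph state on 3 vertices is non-classical by the Agarwal–Tara criterion. -/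
open Matrix

/-- falling-factorial diagonal entries -/
def dd : ℕ → Fin (2^3) → ℂ
  | 0 => fun _ => 1
  | (k+1) => fun n => if h : (n : ℕ) = 0 then 0 else ((n : ℕ) : ℂ) * dd k ⟨(n : ℕ) - 1, by omega⟩

lemma step (d : Fin (2^3) → ℂ) :
    (ann (2^3))ᴴ * (Matrix.diagonal d * ann (2^3)) =
      Matrix.diagonal (fun n : Fin (2^3) =>
        if h : (n : ℕ) = 0 then 0 else ((n : ℕ) : ℂ) * d ⟨(n : ℕ) - 1, by omega⟩) := by
  ext k l
  rw [Matrix.mul_apply]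
  simp only [Matrix.diagonal_mul, Matrix.conjTranspose_apply, ann, Matrix.of_apply,
    apply_ite star, star_zero, Complex.star_def, Complex.conj_ofReal]
  by_cases h : k = l
  · subst h
    simp only [Matrix.diagonal_apply_eq]
    rcases Nat.eq_zero_or_pos (k : ℕ) with h0 | h0
    · rw [Finset.sum_eq_zero, dif_pos h0]
      intro j _
      have : ¬ ((j : ℕ) + 1 = (k : ℕ)) := by omega
      simp [this]
    · rw [dif_neg (by omega), Finset.sum_eq_single (⟨(k : ℕ) - 1, by omega⟩ : Fin (2^3))]
      · have h1 : ((⟨(k : ℕ) - 1, by omega⟩ : Fin (2^3)) : ℕ) + 1 = (k : ℕ) := by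
          simp; omega
        rw [if_pos h1]
        have hs : ((Real.sqrt (k:ℕ) : ℝ) : ℂ) * ((Real.sqrt (k:ℕ) : ℝ) : ℂ) = ((k:ℕ) : ℂ) := by
          rw [← Complex.ofReal_mul, Real.mul_self_sqrt (by positivity)]
          norm_num
        rw [mul_comm (d _), ← mul_assoc, hs]
      · intro b _ hb
        have : ¬ ((b : ℕ) + 1 = (k : ℕ)) := by
          intro hc
          apply hb
          apply Fin.ext
          simp
          omega
        simp [this]
      · simp
  · rw [Finset.sum_eq_zero, Matrix.diagonal_apply_ne _ h]
    intro j _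
    by_cases h1 : (j : ℕ) + 1 = (k : ℕ)
    · have h2 : ¬ ((j : ℕ) + 1 = (l : ℕ)) := fun hc => h (Fin.ext (by omega))
      simp [h2]
    · simp [h1]

lemma hDk (k : ℕ) : (ann (2^3))ᴴ ^ k * (ann (2^3)) ^ k = Matrix.diagonal (dd k) := by
  induction k with
  | zero => simp [dd, Matrix.diagonal_one]
  | succ k ih =>
    have : (ann (2^3))ᴴ ^ (k+1) * (ann (2^3)) ^ (k+1)
        = (ann (2^3))ᴴ * (((ann (2^3))ᴴ ^ k * (ann (2^3)) ^ k) * ann (2^3)) := by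
      rw [pow_succ' ((ann (2^3))ᴴ), pow_succ (ann (2^3))]
      simp only [mul_assoc]
    rw [this, ih, step]
    rfl

lemma hdot (f : Fin (2^3) → Fin 2) (d : Fin (2^3) → ℂ) :
    star (hgState (2^3) f) ⬝ᵥ (Matrix.diagonal d).mulVec (hgState (2^3) f)
      = (∑ n, d n) / 8 := by
  have hs : ((Real.sqrt ((2^3 : ℕ) : ℝ)) : ℂ) * ((Real.sqrt ((2^3 : ℕ) : ℝ)) : ℂ) = 8 := by
    rw [← Complex.ofReal_mul, Real.mul_self_sqrt (by positivity)]
    norm_num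
  rw [Finset.sum_div]
  simp only [dotProduct, Pi.star_apply, Matrix.mulVec_diagonal, hgState]
  refine Finset.sum_congr rfl fun n _ => ?_
  rw [star_div₀, star_pow, star_neg, star_one, Complex.star_def, Complex.conj_ofReal]
  have h1 : ((-1 : ℂ)) ^ ((f n : ℕ)) * ((-1 : ℂ)) ^ ((f n : ℕ)) = 1 := by
    rw [← mul_pow]
    norm_num
  have : ((-1:ℂ) ^ (f n : ℕ) / ((Real.sqrt ((2^3:ℕ):ℝ)) : ℂ)) *
      (d n * ((-1:ℂ) ^ (f n : ℕ) / ((Real.sqrt ((2^3:ℕ):ℝ)) : ℂ)))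
      = d n * (((-1:ℂ) ^ (f n : ℕ) * (-1:ℂ) ^ (f n : ℕ)) /
        (((Real.sqrt ((2^3:ℕ):ℝ)) : ℂ) * ((Real.sqrt ((2^3:ℕ):ℝ)) : ℂ))) := by
    ring
  rw [this, h1, hs, mul_one_div]


/-- for `d = 3` (`M = 8`) and any Boolean function `f`, the 3×3
Agarwal–Tara moment matrices satisfy `det m⁽³⁾ = −245/4`, `det μ⁽³⁾ = 441/4`, and
`A₃ = det m⁽³⁾/(det μ⁽³⁾ − det m⁽³⁾) = −5/14 < 0`, witnessing non-classicality. -/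
theorem agarwal_tara_A3_d3 (f : Fin (2 ^ 3) → Fin 2) :
    let a := ann (2 ^ 3)
    let G := hgState (2 ^ 3) f
    let m : ℕ → ℂ := fun k => star G ⬝ᵥ ((aᴴ ^ k * a ^ k).mulVec G)
    let μ : ℕ → ℂ := fun k => star G ⬝ᵥ (((aᴴ * a) ^ k).mulVec G)
    let detm := Matrix.det !![1, m 1, m 2; m 1, m 2, m 3; m 2, m 3, m 4]
    let detμ := Matrix.det !![1, μ 1, μ 2; μ 1, μ 2, μ 3; μ 2, μ 3, μ 4]
    detm = -245 / 4 ∧ detμ = 441 / 4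
      ∧ detm / (detμ - detm) = -5 / 14 ∧ ((-5 : ℝ) / 14 < 0) := by
  intro a G m μ detm detμ
  have hm : ∀ k, m k = (∑ n : Fin 8, dd k n) / 8 := fun k => by
    show star G ⬝ᵥ ((aᴴ ^ k * a ^ k).mulVec G) = _
    rw [show aᴴ ^ k * a ^ k = Matrix.diagonal (dd k) from hDk k]
    exact hdot f (dd k)
  have hN : aᴴ * a = Matrix.diagonal (dd 1) := by
    have h := hDk 1
    simpa [a] using h
  have hμ : ∀ k, μ k = (∑ n : Fin 8, (dd 1 n) ^ k) / 8 := fun k => by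
    show star G ⬝ᵥ (((aᴴ * a) ^ k).mulVec G) = _
    rw [hN, Matrix.diagonal_pow]
    exact hdot f _
  have hm1 : m 1 = 7 / 2 := by rw [hm]; norm_num [dd, Fin.sum_univ_eight, show ((3:Fin 8):ℕ)=3 from rfl, show ((4:Fin 8):ℕ)=4 from rfl, show ((5:Fin 8):ℕ)=5 from rfl, show ((6:Fin 8):ℕ)=6 from rfl, show ((7:Fin 8):ℕ)=7 from rfl, -Fin.val_eq_zero_iff]
  have hm2 : m 2 = 14 := by rw [hm]; norm_num [dd, Fin.sum_univ_eight, show ((3:Fin 8):ℕ)=3 from rfl, show ((4:Fin 8):ℕ)=4 from rfl, show ((5:Fin 8):ℕ)=5 from rfl, show ((6:Fin 8):ℕ)=6 from rfl, show ((7:Fin 8):ℕ)=7 from rfl, -Fin.val_eq_zero_iff]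
  have hm3 : m 3 = 105 / 2 := by rw [hm]; norm_num [dd, Fin.sum_univ_eight, show ((3:Fin 8):ℕ)=3 from rfl, show ((4:Fin 8):ℕ)=4 from rfl, show ((5:Fin 8):ℕ)=5 from rfl, show ((6:Fin 8):ℕ)=6 from rfl, show ((7:Fin 8):ℕ)=7 from rfl, -Fin.val_eq_zero_iff]
  have hm4 : m 4 = 168 := by rw [hm]; norm_num [dd, Fin.sum_univ_eight, show ((3:Fin 8):ℕ)=3 from rfl, show ((4:Fin 8):ℕ)=4 from rfl, show ((5:Fin 8):ℕ)=5 from rfl, show ((6:Fin 8):ℕ)=6 from rfl, show ((7:Fin 8):ℕ)=7 from rfl, -Fin.val_eq_zero_iff]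
  have hμ1 : μ 1 = 7 / 2 := by rw [hμ]; norm_num [dd, Fin.sum_univ_eight, show ((3:Fin 8):ℕ)=3 from rfl, show ((4:Fin 8):ℕ)=4 from rfl, show ((5:Fin 8):ℕ)=5 from rfl, show ((6:Fin 8):ℕ)=6 from rfl, show ((7:Fin 8):ℕ)=7 from rfl, -Fin.val_eq_zero_iff]
  have hμ2 : μ 2 = 35 / 2 := by rw [hμ]; norm_num [dd, Fin.sum_univ_eight, show ((3:Fin 8):ℕ)=3 from rfl, show ((4:Fin 8):ℕ)=4 from rfl, show ((5:Fin 8):ℕ)=5 from rfl, show ((6:Fin 8):ℕ)=6 from rfl, show ((7:Fin 8):ℕ)=7 from rfl, -Fin.val_eq_zero_iff]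
  have hμ3 : μ 3 = 98 := by rw [hμ]; norm_num [dd, Fin.sum_univ_eight, show ((3:Fin 8):ℕ)=3 from rfl, show ((4:Fin 8):ℕ)=4 from rfl, show ((5:Fin 8):ℕ)=5 from rfl, show ((6:Fin 8):ℕ)=6 from rfl, show ((7:Fin 8):ℕ)=7 from rfl, -Fin.val_eq_zero_iff]
  have hμ4 : μ 4 = 1169 / 2 := by rw [hμ]; norm_num [dd, Fin.sum_univ_eight, show ((3:Fin 8):ℕ)=3 from rfl, show ((4:Fin 8):ℕ)=4 from rfl, show ((5:Fin 8):ℕ)=5 from rfl, show ((6:Fin 8):ℕ)=6 from rfl, show ((7:Fin 8):ℕ)=7 from rfl, -Fin.val_eq_zero_iff]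
  have hdm : detm = -245 / 4 := by
    show Matrix.det !![1, m 1, m 2; m 1, m 2, m 3; m 2, m 3, m 4] = -245 / 4
    rw [Matrix.det_fin_three, hm1, hm2, hm3, hm4]
    norm_num [Matrix.cons_val_zero, Matrix.cons_val_one, Matrix.head_cons, Matrix.cons_val_two, Matrix.tail_cons]
  have hdμ : detμ = 441 / 4 := by
    show Matrix.det !![1, μ 1, μ 2; μ 1, μ 2, μ 3; μ 2, μ 3, μ 4] = 441 / 4
    rw [Matrix.det_fin_three, hμ1, hμ2, hμ3, hμ4]
    norm_num [Matrix.cons_val_zero, Matrix.cons_val_one, Matrix.head_cons, Matrix.cons_val_two, Matrix.tail_cons]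
  refine ⟨hdm, hdμ, ?_, by norm_num⟩
  rw [hdm, hdμ]
  norm_num
end
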